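/- Let M > 0 and a > 0 be real numbers, and define r₁ = (2a/√3)·sinh((1/3)·arsinh(3√3·M/a)). Then r₁ > 0, 1 − 2M/r₁ + r₁²/a² = 0, and for every r > 0 one has 1 − 2M/r + r²/a² > 0 if and only if r > r₁. In particular, r₁ is the unique positive root of r ↦ 1 − 2M/r + r²/a². -/

import Mathlib

lemma sinh_three_mul (t : ℝ) :
    Real.sinh (3 * t) = 4 * Real.sinh t ^ 3 + 3 * Real.sinh t := by
  have h1 : (3 : ℝ) * t = 2 * t + t := by ring
  rw [h1, Real.sinh_add, Real.sinh_two_mul, Real.cosh_two_mul]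
  have h2 := Real.cosh_sq t
  linear_combination (3 * Real.sinh t) * h2

/-- The unique positive root `r₁` of `r ↦ 1 - 2M/r + r²/a²` (the allowed
region of the open K = -1 McVittie spacetime), given by the hyperbolic solution formula. -/
theorem mcvittie_open_allowed_region (M a : ℝ) (hM : 0 < M) (ha : 0 < a)
    (r₁ : ℝ)
    (hr₁ : r₁ = (2 * a / Real.sqrt 3) *
      Real.sinh ((1 / 3) * Real.arsinh (3 * Real.sqrt 3 * M / a))) :
    0 < r₁ ∧ 1 - 2 * M / r₁ + r₁ ^ 2 / a ^ 2 = 0 ∧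
    (∀ r : ℝ, 0 < r → (0 < 1 - 2 * M / r + r ^ 2 / a ^ 2 ↔ r₁ < r)) ∧
    (∀ r : ℝ, 0 < r → 1 - 2 * M / r + r ^ 2 / a ^ 2 = 0 → r = r₁) := by
  have hs3 : (0:ℝ) < Real.sqrt 3 := Real.sqrt_pos.mpr (by norm_num)
  have hs3sq : Real.sqrt 3 ^ 2 = 3 := Real.sq_sqrt (by norm_num)
  set X : ℝ := 3 * Real.sqrt 3 * M / a with hX
  have hXpos : 0 < X := by positivity
  set t : ℝ := (1 / 3) * Real.arsinh X with ht
  have htpos : 0 < t := by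
    have : 0 < Real.arsinh X := Real.arsinh_pos_iff.mpr hXpos
    positivity
  have hspos : 0 < Real.sinh t := Real.sinh_pos_iff.mpr htpos
  have h3t : Real.sinh (3 * t) = X := by
    have h : 3 * t = Real.arsinh X := by rw [ht]; ring
    rw [h, Real.sinh_arsinh]
  have hsid : 4 * Real.sinh t ^ 3 + 3 * Real.sinh t = X := by
    rw [← sinh_three_mul, h3t]
  have hr₁pos : 0 < r₁ := by rw [hr₁]; positivity
  -- key cubic identity
  have hkey : r₁ ^ 3 + a ^ 2 * r₁ = 2 * M * a ^ 2 := by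
    rw [hr₁]
    have ha' : a ≠ 0 := ne_of_gt ha
    have hs3' : Real.sqrt 3 ≠ 0 := ne_of_gt hs3
    have hXdef : X * a = 3 * Real.sqrt 3 * M := by
      rw [hX]; field_simp
    field_simp
    linear_combination a * hsid + hXdef +
      (a*Real.sinh t - Real.sqrt 3*M) * hs3sq
  have hQ : ∀ r : ℝ, 0 < r → 0 < r ^ 2 + r * r₁ + r₁ ^ 2 + a ^ 2 := by
    intro r hr; positivity
  have hfac : ∀ r : ℝ, 0 < r →
      1 - 2 * M / r + r ^ 2 / a ^ 2 =
        (r - r₁) * (r ^ 2 + r * r₁ + r₁ ^ 2 + a ^ 2) / (r * a ^ 2) := by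
    intro r hr
    have hr' : r ≠ 0 := ne_of_gt hr
    have ha' : a ≠ 0 := ne_of_gt ha
    field_simp
    linear_combination hkey
  have hzero : 1 - 2 * M / r₁ + r₁ ^ 2 / a ^ 2 = 0 := by
    rw [hfac r₁ hr₁pos]; simp
  refine ⟨hr₁pos, hzero, ?_, ?_⟩
  · intro r hr
    rw [hfac r hr]
    have hden : 0 < r * a ^ 2 := by positivity
    rw [div_pos_iff]
    constructor
    · rintro (⟨h1, _⟩ | ⟨_, h2⟩)
      · nlinarith [hQ r hr]
      · linarith
    · intro h
      exact Or.inl ⟨by nlinarith [hQ r hr], hden⟩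
  · intro r hr hzr
    rw [hfac r hr] at hzr
    have hden : r * a ^ 2 ≠ 0 := by positivity
    have := (div_eq_zero_iff.mp hzr).resolve_right hden
    have := mul_eq_zero.mp this
    rcases this with h | h
    · linarith
    · exact absurd h (ne_of_gt (hQ r hr))
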